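/- If the hyperplane H: x_i = α in R^n, with 1 < i < n and 2 ≤ α ≤ n-1, is used to split the permutahedron Π_n, then the split is bad: there exists a permutation σ ∈ S_n with σ(i-1)=α-1, σ(i)=α, σ(i+1)=α+1 such that both σ and s_α s_{α-1} s_α σ lie on H, while the Bruhat interval [σ, s_α s_{α-1} s_α σ] contains permutations strictly on both sides of H. -/

import Mathlib

/-- Number of inversions (Coxeter length) of a permutation of `Fin n`. -/
def invCount {n : ℕ} (σ : Equiv.Perm (Fin n)) : ℕ :=
  ((Finset.univ : Finset (Fin n × Fin n)).filter
    (fun p => p.1 < p.2 ∧ σ p.2 < σ p.1)).card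

/-- Covering relation of the strong Bruhat order: multiply by a transposition
(on values) and increase the length by exactly one. -/
def BruhatCover {n : ℕ} (u v : Equiv.Perm (Fin n)) : Prop :=
  (∃ a b : Fin n, a ≠ b ∧ v = Equiv.swap a b * u) ∧ invCount v = invCount u + 1

/-- The strong Bruhat order on `Equiv.Perm (Fin n)`. -/
def BruhatLE {n : ℕ} : Equiv.Perm (Fin n) → Equiv.Perm (Fin n) → Prop :=
  Relation.ReflTransGen BruhatCover

/-- Sum of the first `j` one-line values of `σ` (values taken in `{1, …, n}`). -/
def firstSum {n : ℕ} (σ : Equiv.Perm (Fin n)) (j : ℕ) : ℕ :=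
  ∑ i ∈ Finset.univ.filter (fun i : Fin n => (i : ℕ) < j), ((σ i : ℕ) + 1)

lemma swap_lt_iff {n : ℕ} (k k' a b : Fin n) (hk : (k' : ℕ) = (k : ℕ) + 1) :
    Equiv.swap k k' b < Equiv.swap k k' a ↔
      ((b < a ∧ ¬(a = k' ∧ b = k)) ∨ (a = k ∧ b = k')) := by
  simp only [Equiv.swap_apply_def]
  split_ifs <;>
    (simp only [Fin.lt_def, Fin.ext_iff, not_and] at *; omega)

lemma cover_adjacent {n : ℕ} (σ : Equiv.Perm (Fin n)) (k k' : Fin n)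
    (hk : (k' : ℕ) = (k : ℕ) + 1) (h : σ⁻¹ k < σ⁻¹ k') :
    BruhatCover σ (Equiv.swap k k' * σ) := by
  have hne : k ≠ k' := by simp [Fin.ext_iff]; omega
  refine ⟨⟨k, k', hne, rfl⟩, ?_⟩
  unfold invCount
  have hset : (Finset.univ.filter fun p : Fin n × Fin n =>
      p.1 < p.2 ∧ (Equiv.swap k k' * σ) p.2 < (Equiv.swap k k' * σ) p.1)
      = insert (σ⁻¹ k, σ⁻¹ k')
        (Finset.univ.filter fun p : Fin n × Fin n => p.1 < p.2 ∧ σ p.2 < σ p.1) := by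
    ext p
    simp only [Finset.mem_filter, Finset.mem_insert, Finset.mem_univ, true_and]
    simp only [Equiv.Perm.mul_apply]
    rw [swap_lt_iff _ _ _ _ hk]
    constructor
    · rintro ⟨h12, (⟨hlt, _⟩ | ⟨h1, h2⟩)⟩
      · exact Or.inr ⟨h12, hlt⟩
      · left
        have e1 : p.1 = σ⁻¹ k := by
          have := congrArg (σ⁻¹ : Equiv.Perm (Fin n)) h1; simpa using this
        have e2 : p.2 = σ⁻¹ k' := by
          have := congrArg (σ⁻¹ : Equiv.Perm (Fin n)) h2; simpa using this
        exact Prod.ext e1 e2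
    · rintro (hp | ⟨h12, hlt⟩)
      · rw [hp]
        exact ⟨h, Or.inr ⟨by simp, by simp⟩⟩
      · refine ⟨h12, Or.inl ⟨hlt, ?_⟩⟩
        rintro ⟨e1, e2⟩
        have e1' : p.1 = σ⁻¹ k' := by
          have := congrArg (σ⁻¹ : Equiv.Perm (Fin n)) e1; simpa using this
        have e2' : p.2 = σ⁻¹ k := by
          have := congrArg (σ⁻¹ : Equiv.Perm (Fin n)) e2; simpa using this
        rw [e1', e2'] at h12
        exact absurd h12 (lt_asymm h)
  rw [hset, Finset.card_insert_of_notMem]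
  · simp only [Finset.mem_filter, Finset.mem_univ, true_and, not_and]
    intro _
    simp only [Equiv.Perm.coe_inv, Equiv.apply_symm_apply]
    simp only [Fin.lt_def]
    omega

lemma bad_split_aux {n : ℕ} [NeZero n] (k2 k1 k0 p2 p1 p0 : Fin n)
    (hk21 : (k1 : ℕ) = (k2 : ℕ) + 1) (hk10 : (k0 : ℕ) = (k1 : ℕ) + 1)
    (hp21 : p2 < p1) (hp10 : p1 < p0)
    (hA : k0 + p2 = k2 + p0) (hB : k0 + p1 = k1 + p0) :
    ∃ σ τ : Equiv.Perm (Fin n),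
      τ = Equiv.swap k1 k0 * (Equiv.swap k2 k1 * (Equiv.swap k1 k0 * σ)) ∧
      σ p2 = k2 ∧ σ p1 = k1 ∧ σ p0 = k0 ∧ τ p1 = k1 ∧
      (∃ τ₁ : Equiv.Perm (Fin n), BruhatLE σ τ₁ ∧ BruhatLE τ₁ τ ∧ τ₁ p1 = k2) ∧
      (∃ τ₂ : Equiv.Perm (Fin n), BruhatLE σ τ₂ ∧ BruhatLE τ₂ τ ∧ τ₂ p1 = k0) := by
  have hne21 : k2 ≠ k1 := by simp [Fin.ext_iff]; omega
  have hne10 : k1 ≠ k0 := by simp [Fin.ext_iff]; omega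
  have hne20 : k2 ≠ k0 := by simp [Fin.ext_iff]; omega
  have hp20 : p2 < p0 := lt_trans hp21 hp10
  set s : Equiv.Perm (Fin n) := Equiv.swap k1 k0 with hsdef
  set t : Equiv.Perm (Fin n) := Equiv.swap k2 k1 with htdef
  set σ : Equiv.Perm (Fin n) := Equiv.addLeft (k0 - p0) with hσdef
  have key : ∀ x y : Fin n, k0 + x = y + p0 → σ x = y := by
    intro x y h
    show (k0 - p0) + x = y
    have h1 : (k0 - p0) + x = k0 + x - p0 := by abel
    rw [h1, h]
    abel
  have hσ2 : σ p2 = k2 := key p2 k2 hA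
  have hσ1 : σ p1 = k1 := key p1 k1 hB
  have hσ0 : σ p0 = k0 := key p0 k0 rfl
  have hi2' : σ⁻¹ k2 = p2 := by rw [← hσ2]; simp
  have hi1' : σ⁻¹ k1 = p1 := by rw [← hσ1]; simp
  have hi0' : σ⁻¹ k0 = p0 := by rw [← hσ0]; simp
  have ts1 : t k1 = k2 := Equiv.swap_apply_right _ _
  have ts2 : t k2 = k1 := Equiv.swap_apply_left _ _
  have ts0 : t k0 = k0 := Equiv.swap_apply_of_ne_of_ne hne20.symm hne10.symm
  have ss1 : s k1 = k0 := Equiv.swap_apply_left _ _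
  have ss0 : s k0 = k1 := Equiv.swap_apply_right _ _
  have ss2 : s k2 = k2 := Equiv.swap_apply_of_ne_of_ne hne21 hne20
  have braid : s * (t * (s * σ)) = t * (s * (t * σ)) := by
    have h1 : s * t * s = Equiv.swap k0 k2 := Equiv.swap_mul_swap_mul_swap hne21 hne20
    have h2 : t * s * t = Equiv.swap k2 k0 := by
      rw [hsdef, htdef, Equiv.swap_comm k2 k1, Equiv.swap_comm k1 k0]
      exact Equiv.swap_mul_swap_mul_swap hne10.symm hne20.symm
    have h3 : s * t * s = t * s * t := by rw [h1, h2, Equiv.swap_comm]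
    calc s * (t * (s * σ)) = (s * t * s) * σ := by group
    _ = (t * s * t) * σ := by rw [h3]
    _ = t * (s * (t * σ)) := by group
  set τ₁ : Equiv.Perm (Fin n) := t * σ with hτ₁def
  set τ₂ : Equiv.Perm (Fin n) := s * σ with hτ₂def
  set u1 : Equiv.Perm (Fin n) := s * τ₁ with hu1def
  set u2 : Equiv.Perm (Fin n) := t * τ₂ with hu2def
  have hτ₁inv : ∀ x : Fin n, τ₁⁻¹ x = σ⁻¹ (t x) := by
    intro x; rw [hτ₁def, mul_inv_rev]
    simp [htdef, Equiv.swap_inv]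
  have hτ₂inv : ∀ x : Fin n, τ₂⁻¹ x = σ⁻¹ (s x) := by
    intro x; rw [hτ₂def, mul_inv_rev]
    simp [hsdef, Equiv.swap_inv]
  have hu1inv : ∀ x : Fin n, u1⁻¹ x = τ₁⁻¹ (s x) := by
    intro x; rw [hu1def, mul_inv_rev]
    simp [hsdef, Equiv.swap_inv]
  have hu2inv : ∀ x : Fin n, u2⁻¹ x = τ₂⁻¹ (t x) := by
    intro x; rw [hu2def, mul_inv_rev]
    simp [htdef, Equiv.swap_inv]
  have c1 : BruhatCover σ τ₁ := cover_adjacent σ k2 k1 hk21 (by rw [hi2', hi1']; exact hp21)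
  have c2 : BruhatCover τ₁ u1 := cover_adjacent τ₁ k1 k0 hk10 (by
    rw [hτ₁inv, hτ₁inv, ts1, ts0, hi2', hi0']; exact hp20)
  have c3 : BruhatCover u1 (t * u1) := cover_adjacent u1 k2 k1 hk21 (by
    rw [hu1inv, hu1inv, hτ₁inv, hτ₁inv, ss2, ss1, ts2, ts0, hi1', hi0']; exact hp10)
  have d1 : BruhatCover σ τ₂ := cover_adjacent σ k1 k0 hk10 (by rw [hi1', hi0']; exact hp10)
  have d2 : BruhatCover τ₂ u2 := cover_adjacent τ₂ k2 k1 hk21 (by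
    rw [hτ₂inv, hτ₂inv, ss2, ss1, hi2', hi0']; exact hp20)
  have d3 : BruhatCover u2 (s * u2) := cover_adjacent u2 k1 k0 hk10 (by
    rw [hu2inv, hu2inv, hτ₂inv, hτ₂inv, ts1, ts0, ss2, ss0, hi2', hi1']; exact hp21)
  refine ⟨σ, s * (t * (s * σ)), rfl, hσ2, hσ1, hσ0, ?_, ⟨τ₁, ?_, ?_, ?_⟩, ⟨τ₂, ?_, ?_, ?_⟩⟩
  · show s (t (s (σ p1))) = k1
    rw [hσ1, ss1, ts0, ss0]
  · exact Relation.ReflTransGen.single c1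
  · rw [show s * (t * (s * σ)) = t * u1 by rw [hu1def, hτ₁def]; exact braid]
    exact Relation.ReflTransGen.head c2 (Relation.ReflTransGen.single c3)
  · show t (σ p1) = k2
    rw [hσ1, ts1]
  · exact Relation.ReflTransGen.single d1
  · have : s * (t * (s * σ)) = s * u2 := by rw [hu2def, hτ₂def]
    rw [this]
    exact Relation.ReflTransGen.head d2 (Relation.ReflTransGen.single d3)
  · show s (σ p1) = k0
    rw [hσ1, ss1]

theorem interior_coordinate_hyperplane_split_is_bad (n i α : ℕ)
    (hi1 : 2 ≤ i) (hi2 : i ≤ n - 1) (ha1 : 2 ≤ α) (ha2 : α ≤ n - 1) (hn : 3 ≤ n) :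
    ∃ σ τ : Equiv.Perm (Fin n),
      τ = Equiv.swap (⟨α - 1, by omega⟩ : Fin n) ⟨α, by omega⟩ *
          (Equiv.swap (⟨α - 2, by omega⟩ : Fin n) ⟨α - 1, by omega⟩ *
           (Equiv.swap (⟨α - 1, by omega⟩ : Fin n) ⟨α, by omega⟩ * σ)) ∧
      (σ ⟨i - 2, by omega⟩ : ℕ) + 1 = α - 1 ∧
      (σ ⟨i - 1, by omega⟩ : ℕ) + 1 = α ∧
      (σ ⟨i, by omega⟩ : ℕ) + 1 = α + 1 ∧
      (τ ⟨i - 1, by omega⟩ : ℕ) + 1 = α ∧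
      (∃ τ₁ : Equiv.Perm (Fin n), BruhatLE σ τ₁ ∧ BruhatLE τ₁ τ ∧
        (τ₁ ⟨i - 1, by omega⟩ : ℕ) + 1 < α) ∧
      (∃ τ₂ : Equiv.Perm (Fin n), BruhatLE σ τ₂ ∧ BruhatLE τ₂ τ ∧
        α < (τ₂ ⟨i - 1, by omega⟩ : ℕ) + 1) := by
  haveI : NeZero n := ⟨by omega⟩
  obtain ⟨σ, τ, hτ, hσ2, hσ1, hσ0, hτ1, ⟨τ₁, hA1, hA2, hA3⟩, ⟨τ₂, hB1, hB2, hB3⟩⟩ :=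
    bad_split_aux (n := n) ⟨α - 2, by omega⟩ ⟨α - 1, by omega⟩ ⟨α, by omega⟩
      ⟨i - 2, by omega⟩ ⟨i - 1, by omega⟩ ⟨i, by omega⟩
      (by simp; omega) (by simp; omega)
      (by simp [Fin.lt_def]; omega) (by simp [Fin.lt_def]; omega)
      (by apply Fin.ext; simp only [Fin.val_add]; congr 1; omega)
      (by apply Fin.ext; simp only [Fin.val_add]; congr 1; omega)
  exact ⟨σ, τ, hτ, by rw [hσ2]; show α - 2 + 1 = α - 1; omega, by rw [hσ1]; show α - 1 + 1 = α; omega, by rw [hσ0],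
    by rw [hτ1]; show α - 1 + 1 = α; omega, ⟨τ₁, hA1, hA2, by rw [hA3]; show α - 2 + 1 < α; omega⟩,
    ⟨τ₂, hB1, hB2, by rw [hB3]; show α < α + 1; omega⟩⟩
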